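/- Let X be a geodesic δ-hyperbolic metric space (Rips condition: in every geodesic triangle each side lies in the union of the δ-neighbourhoods of the other two) with basepoint e. Let n ≥ 3δ and let x, y ∈ X satisfy d(x,e) ≥ n and d(x,y) ≤ n/4. Then for every geodesic g₀ from x to e, every geodesic g from y to e (parametrized by arclength from y), and every point p = g(t) with t ∈ [n, 2n], we have d(p, g₀([n/2, 5n/2])) ≤ 3δ. -/
import Mathlib


/-- A geodesic from `a` to `b`, parametrized by arclength on `[0, dist a b]`. -/
def IsGeodesicFrom {X : Type*} [MetricSpace X] (γ : ℝ → X) (a b : X) : Prop :=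
  γ 0 = a ∧ γ (dist a b) = b ∧
    ∀ s ∈ Set.Icc (0 : ℝ) (dist a b), ∀ t ∈ Set.Icc (0 : ℝ) (dist a b),
      dist (γ s) (γ t) = |s - t|

/-- The Rips thin-triangles condition with constant `δ`: in every geodesic triangle each
side lies in the union of the `δ`-neighbourhoods of the other two. -/
def RipsHyperbolic (X : Type*) [MetricSpace X] (δ : ℝ) : Prop :=
  ∀ (a b c : X) (γ₁ γ₂ γ₃ : ℝ → X),
    IsGeodesicFrom γ₁ a b → IsGeodesicFrom γ₂ b c → IsGeodesicFrom γ₃ a c →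
      ∀ s ∈ Set.Icc (0 : ℝ) (dist a b),
        ∃ u ∈ γ₂ '' Set.Icc (0 : ℝ) (dist b c) ∪ γ₃ '' Set.Icc (0 : ℝ) (dist a c),
          dist (γ₁ s) u ≤ δ

/-- Lemma 3.1: geodesic stability in a δ-hyperbolic space. Any point `g(t)`, `t ∈ [n,2n]`,
on a geodesic `g` from `y` to `e` is within `3δ` of `g₀([n/2, 5n/2])` for any geodesic `g₀`
from `x` to `e`, provided `n ≥ 3δ`, `d(x,e) ≥ n` and `d(x,y) ≤ n/4`. -/
theorem stmt7 {X : Type*} [MetricSpace X] (δ : ℝ) (hδ : 0 ≤ δ)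
    (hgeo : ∀ a b : X, ∃ γ : ℝ → X, IsGeodesicFrom γ a b)
    (hrips : RipsHyperbolic X δ)
    (e x y : X) (n : ℝ) (hn : 3 * δ ≤ n)
    (hx : n ≤ dist x e) (hxy : dist x y ≤ n / 4)
    (g₀ g : ℝ → X) (hg₀ : IsGeodesicFrom g₀ x e) (hg : IsGeodesicFrom g y e)
    (t : ℝ) (ht : t ∈ Set.Icc n (2 * n)) (ht' : t ∈ Set.Icc 0 (dist y e)) :
    ∃ s ∈ Set.Icc (n / 2) (5 * n / 2) ∩ Set.Icc 0 (dist x e),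
      dist (g t) (g₀ s) ≤ 3 * δ := by
  obtain ⟨hg₀0, hg₀D, hg₀iso⟩ := hg₀
  obtain ⟨hg0, hgL, hgiso⟩ := hg
  set D := dist x e with hD
  have hn0 : (0:ℝ) ≤ n := by linarith
  -- reversed geodesic from e to x
  have hDex : dist e x = D := dist_comm e x
  have hg₀' : IsGeodesicFrom (fun s => g₀ (D - s)) e x := by
    refine ⟨by simpa using hg₀D, ?_, ?_⟩
    · rw [hDex]; simpa using hg₀0
    · intro s hs u hu
      rw [hDex] at hs hu
      rw [hg₀iso (D - s) ⟨by linarith [hs.1, hs.2], by linarith [hs.1]⟩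
          (D - u) ⟨by linarith [hu.1, hu.2], by linarith [hu.1]⟩]
      rw [abs_sub_comm]
      ring_nf
  obtain ⟨γ₃, hγ₃⟩ := hgeo y x
  obtain ⟨u, hu, hdu⟩ :=
    hrips y e x g (fun s => g₀ (D - s)) γ₃ ⟨hg0, hgL, hgiso⟩ hg₀' hγ₃ t ht'
  -- distance from y to g t is t
  have hyt : dist y (g t) = t := by
    have := hgiso 0 ⟨le_refl _, dist_nonneg⟩ t ht'
    rw [hg0] at this
    rw [this, abs_sub_comm, sub_zero, abs_of_nonneg ht'.1]
  rcases hu with ⟨r, hr, rfl⟩ | ⟨r, hr, rfl⟩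
  · -- near the geodesic g₀
    rw [hDex] at hr
    set s' := D - r with hs'
    have hdu' : dist (g t) (g₀ s') ≤ δ := hdu
    have hs'mem : s' ∈ Set.Icc (0:ℝ) D := ⟨by linarith [hr.1, hr.2], by linarith [hr.1]⟩
    have hxs' : dist x (g₀ s') = s' := by
      have := hg₀iso 0 ⟨le_refl _, dist_nonneg⟩ s' hs'mem
      rw [hg₀0] at this
      rw [this, abs_sub_comm, sub_zero, abs_of_nonneg hs'mem.1]
    -- dist x (g t) bounds
    have hxt_lb : t - dist x y ≤ dist x (g t) := by
      have := dist_triangle y x (g t)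
      rw [dist_comm y x] at this
      linarith [hyt ▸ this]
    have hxt_ub : dist x (g t) ≤ dist x y + t := by
      have := dist_triangle x y (g t)
      linarith [hyt ▸ this]
    have hs'_lb : dist x (g t) - δ ≤ s' := by
      have h1 := dist_triangle x (g₀ s') (g t)
      rw [hxs'] at h1
      rw [dist_comm (g₀ s') (g t)] at h1
      linarith
    have hs'_ub : s' ≤ dist x (g t) + δ := by
      have h1 := dist_triangle x (g t) (g₀ s')
      rw [hxs'] at h1
      linarith
    -- now s' ∈ [3n/4 - δ, 9n/4 + δ]
    have hs'1 : 3 * n / 4 - δ ≤ s' := by linarith [ht.1]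
    have hs'2 : s' ≤ 9 * n / 4 + δ := by linarith [ht.2]
    set s := max (n / 2) (min s' (5 * n / 2)) with hsdef
    have hs_lo : n / 2 ≤ s := le_max_left _ _
    have hs_hi : s ≤ 5 * n / 2 := max_le (by linarith) (min_le_right _ _)
    have hs_D : s ≤ D :=
      max_le (by linarith) (le_trans (min_le_left _ _) hs'mem.2)
    have hs_0 : (0:ℝ) ≤ s := by linarith
    have habs : |s' - s| ≤ δ := by
      rw [abs_le]
      constructor
      · -- s - s' ≤ δ
        have : s ≤ s' + δ := max_le (by linarith) (by linarith [min_le_left s' (5 * n / 2)])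
        linarith
      · -- s' - s ≤ δ
        rcases le_total s' (5 * n / 2) with h | h
        · have : min s' (5 * n / 2) = s' := min_eq_left h
          have : s' ≤ s := this ▸ le_max_right (n / 2) _
          linarith
        · have h5 : min s' (5 * n / 2) = 5 * n / 2 := min_eq_right h
          have : 5 * n / 2 ≤ s := h5 ▸ le_max_right (n / 2) _
          linarith
    have hdss : dist (g₀ s') (g₀ s) ≤ δ := by
      rw [hg₀iso s' hs'mem s ⟨hs_0, hs_D⟩]
      exact habs
    refine ⟨s, ⟨⟨hs_lo, hs_hi⟩, hs_0, hs_D⟩, ?_⟩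
    calc dist (g t) (g₀ s) ≤ dist (g t) (g₀ s') + dist (g₀ s') (g₀ s) := dist_triangle _ _ _
      _ ≤ δ + δ := add_le_add hdu' hdss
      _ ≤ 3 * δ := by linarith
  · -- near the geodesic from y to x : degenerate case
    obtain ⟨hγ0, hγL, hγiso⟩ := hγ₃
    have hyr : dist y (γ₃ r) = r := by
      have := hγiso 0 ⟨le_refl _, dist_nonneg⟩ r hr
      rw [hγ0] at this
      rw [this, abs_sub_comm, sub_zero, abs_of_nonneg hr.1]
    have hryx : r ≤ dist x y := by rw [dist_comm x y]; exact hr.2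
    have htsmall : t ≤ n / 4 + δ := by
      have h1 := dist_triangle y (γ₃ r) (g t)
      rw [hyr] at h1
      have h2 : dist (γ₃ r) (g t) ≤ δ := by rw [dist_comm]; exact hdu
      linarith
    have hnz : n = 0 := by linarith [ht.1]
    have hδz : δ = 0 := by linarith
    have htz : t = 0 := le_antisymm (by linarith) (by linarith [ht.1])
    have hxyz : x = y := by
      have : dist x y ≤ 0 := by linarith
      exact dist_le_zero.mp this
    refine ⟨0, ⟨⟨by linarith, by linarith⟩, le_refl _, dist_nonneg⟩, ?_⟩
    rw [htz, hg0, hg₀0, ← hxyz, dist_comm]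
    simp [hδz]
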